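/- Let n ∈ ℕ, let p, q be real parameters with q > −1, and let δ, ε, τ ∈ ℂ with Re(δ) > 0 and Re(τ) < 1 + min{0, Re(ε)}. Then for x > 0, the right-sided Erdélyi–Kober fractional integral satisfies (K⁻_{ε,δ} t^{τ−1} M_n^{(p,q)}(1/t))(x) = (−1)^n Γ(1+q+n) Γ(ε−τ+1) / [Γ(1+q) Γ(δ+ε−τ+1)] · x^{τ−1} · ₃F₂(1+n−p, −n, ε−τ+1; 1+q, δ+ε−τ+1; −1/x). -/

import Mathlib

open MeasureTheory

/-- Pochhammer symbol `(a)_n = a (a+1) ⋯ (a+n−1)`. -/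
noncomputable def poch (a : ℂ) (n : ℕ) : ℂ := ∏ i ∈ Finset.range n, (a + i)

/-- Generalized hypergeometric function `ₚF_q(a₁,…,a_p; c₁,…,c_q; x)`. -/
noncomputable def genHyp (as cs : List ℂ) (x : ℂ) : ℂ :=
  ∑' k : ℕ, ((as.map (fun a => poch a k)).prod / (cs.map (fun c => poch c k)).prod)
    * x ^ k / (Nat.factorial k)

/-- Appell's double hypergeometric function `F₃(a,a′,b,b′;c;x,y)`. -/
noncomputable def appellF3 (a a' b b' c x y : ℂ) : ℂ :=
  ∑' mn : ℕ × ℕ, poch a mn.1 * poch a' mn.2 * poch b mn.1 * poch b' mn.2 /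
    (poch c (mn.1 + mn.2) * (Nat.factorial mn.1) * (Nat.factorial mn.2)) * x ^ mn.1 * y ^ mn.2

/-- Generalized binomial coefficient `binom(a,k) = a(a−1)⋯(a−k+1)/k!`. -/
noncomputable def gbinom (a : ℂ) (k : ℕ) : ℂ := (∏ i ∈ Finset.range k, (a - i)) / (Nat.factorial k)

/-- Jacobi type orthogonal polynomial `M_n^{(p,q)}(x)`. -/
noncomputable def jacobiM (n : ℕ) (p q x : ℂ) : ℂ :=
  (-1) ^ n * (Nat.factorial n) * ∑ k ∈ Finset.range (n + 1),
    gbinom (p - n - 1) k * gbinom (q + n) (n - k) * (-x) ^ k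

/-- Left-sided Marichev–Saigo–Maeda fractional integral operator. -/
noncomputable def msmLeft (δ δ' μ μ' ε : ℂ) (f : ℝ → ℂ) (x : ℝ) : ℂ :=
  (x : ℂ) ^ (-δ) / Complex.Gamma ε *
    ∫ t in Set.Ioo (0 : ℝ) x, ((x - t : ℝ) : ℂ) ^ (ε - 1) * (t : ℂ) ^ (-δ') *
      appellF3 δ δ' μ μ' ε ((1 - t / x : ℝ) : ℂ) ((1 - x / t : ℝ) : ℂ) * f t

/-- Right-sided Marichev–Saigo–Maeda fractional integral operator. -/
noncomputable def msmRight (δ δ' μ μ' ε : ℂ) (f : ℝ → ℂ) (x : ℝ) : ℂ :=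
  (x : ℂ) ^ (-δ') / Complex.Gamma ε *
    ∫ t in Set.Ioi x, ((t - x : ℝ) : ℂ) ^ (ε - 1) * (t : ℂ) ^ (-δ) *
      appellF3 δ δ' μ μ' ε ((1 - t / x : ℝ) : ℂ) ((1 - x / t : ℝ) : ℂ) * f t

/-- Left-sided Saigo fractional integral operator. -/
noncomputable def saigoLeft (δ μ ε : ℂ) (f : ℝ → ℂ) (x : ℝ) : ℂ :=
  (x : ℂ) ^ (-δ - μ) / Complex.Gamma δ *
    ∫ t in Set.Ioo (0 : ℝ) x, ((x - t : ℝ) : ℂ) ^ (δ - 1) *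
      genHyp [δ + μ, -ε] [δ] ((1 - t / x : ℝ) : ℂ) * f t

/-- Right-sided Saigo fractional integral operator. -/
noncomputable def saigoRight (δ μ ε : ℂ) (f : ℝ → ℂ) (x : ℝ) : ℂ :=
  (1 / Complex.Gamma δ) *
    ∫ t in Set.Ioi x, ((t - x : ℝ) : ℂ) ^ (δ - 1) * (t : ℂ) ^ (-δ - μ) *
      genHyp [δ + μ, -ε] [δ] ((1 - x / t : ℝ) : ℂ) * f t

/-- Left-sided Riemann–Liouville fractional integral operator. -/
noncomputable def rlLeft (δ : ℂ) (f : ℝ → ℂ) (x : ℝ) : ℂ :=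
  (1 / Complex.Gamma δ) * ∫ t in Set.Ioo (0 : ℝ) x, ((x - t : ℝ) : ℂ) ^ (δ - 1) * f t

/-- Right-sided Riemann–Liouville fractional integral operator. -/
noncomputable def rlRight (δ : ℂ) (f : ℝ → ℂ) (x : ℝ) : ℂ :=
  (1 / Complex.Gamma δ) * ∫ t in Set.Ioi x, ((t - x : ℝ) : ℂ) ^ (δ - 1) * f t

/-- Left-sided Erdélyi–Kober fractional integral operator `I⁺_{ε,δ}`. -/
noncomputable def ekLeft (ε δ : ℂ) (f : ℝ → ℂ) (x : ℝ) : ℂ :=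
  (x : ℂ) ^ (-δ - ε) / Complex.Gamma δ *
    ∫ t in Set.Ioo (0 : ℝ) x, ((x - t : ℝ) : ℂ) ^ (δ - 1) * (t : ℂ) ^ ε * f t

/-- Right-sided Erdélyi–Kober fractional integral operator `K⁻_{ε,δ}`. -/
noncomputable def ekRight (ε δ : ℂ) (f : ℝ → ℂ) (x : ℝ) : ℂ :=
  (x : ℂ) ^ ε / Complex.Gamma δ *
    ∫ t in Set.Ioi x, ((t - x : ℝ) : ℂ) ^ (δ - 1) * (t : ℂ) ^ (-δ - ε) * f t

/-- Left-sided Marichev–Saigo–Maeda fractional derivative operator. -/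
noncomputable def msmDLeft (δ δ' μ μ' ε : ℂ) (f : ℝ → ℂ) (x : ℝ) : ℂ :=
  iteratedDeriv (⌊ε.re⌋ + 1).toNat
    (msmLeft (-δ') (-δ) (-μ' + ((⌊ε.re⌋ + 1 : ℤ) : ℂ)) (-μ) (-ε + ((⌊ε.re⌋ + 1 : ℤ) : ℂ)) f) x

/-- Right-sided Marichev–Saigo–Maeda fractional derivative operator. -/
noncomputable def msmDRight (δ δ' μ μ' ε : ℂ) (f : ℝ → ℂ) (x : ℝ) : ℂ :=
  (-1 : ℂ) ^ (⌊ε.re⌋ + 1).toNat * iteratedDeriv (⌊ε.re⌋ + 1).toNat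
    (msmRight (-δ') (-δ) (-μ') (-μ + ((⌊ε.re⌋ + 1 : ℤ) : ℂ)) (-ε + ((⌊ε.re⌋ + 1 : ℤ) : ℂ)) f) x
lemma cpow_posreal (r : ℝ) (hr : 0 < r) (c : ℂ) :
    ((r:ℝ):ℂ) ^ c = Complex.exp (Real.log r * c) := by
  rw [Complex.cpow_def_of_ne_zero (by exact_mod_cast hr.ne'), Complex.ofReal_log hr.le]

lemma image_div_Ioo (x : ℝ) (hx : 0 < x) :
    (fun u : ℝ => x / u) '' Set.Ioo 0 1 = Set.Ioi x := by
  ext t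
  constructor
  · rintro ⟨u, ⟨hu0, hu1⟩, rfl⟩
    simp only [Set.mem_Ioi]
    rw [lt_div_iff₀ hu0]
    nlinarith
  · intro ht
    simp only [Set.mem_Ioi] at ht
    have hx' : 0 < t := hx.trans ht
    exact ⟨x / t, ⟨div_pos hx hx', (div_lt_one hx').2 ht⟩, by field_simp⟩

section beta
variable {a b : ℂ} {x : ℝ}

lemma beta_deriv (hx : 0 < x) : ∀ u ∈ Set.Ioo (0:ℝ) 1,
    HasDerivWithinAt (fun u : ℝ => x / u) (-x / u ^ 2) (Set.Ioo 0 1) u := by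
  intro u hu
  have hu0 : u ≠ 0 := (hu.1).ne'
  simpa [div_eq_mul_inv, neg_div, mul_comm] using
    (((hasDerivAt_inv hu0).const_mul x).hasDerivWithinAt :
      HasDerivWithinAt (fun u : ℝ => x * u⁻¹) (x * (-(u^2)⁻¹)) (Set.Ioo 0 1) u)

lemma beta_inj (hx : 0 < x) : Set.InjOn (fun u : ℝ => x / u) (Set.Ioo 0 1) := by
  intro u hu v hv h
  simp only at h
  rw [div_eq_div_iff hu.1.ne' hv.1.ne'] at h
  exact mul_left_cancel₀ hx.ne' h.symm

lemma beta_key (ha : 0 < a.re) (hb : 0 < b.re) (hx : 0 < x) :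
    ∀ u ∈ Set.Ioo (0:ℝ) 1,
      |(-x / u ^ 2)| • (((x/u - x : ℝ):ℂ) ^ (a - 1) * ((x/u : ℝ):ℂ) ^ (-a - b)) =
      (x:ℂ) ^ (-b) * (((u:ℝ):ℂ) ^ (b - 1) * ((1 - u : ℝ):ℂ) ^ (a - 1)) := by
  intro u hu
  obtain ⟨hu0, hu1⟩ := hu
  have h1u : 0 < 1 - u := by linarith
  have hq : 0 < x / u := div_pos hx hu0
  have hq2 : 0 < x / u ^ 2 := div_pos hx (by positivity)
  have hr1 : x / u - x = x * (1 - u) / u := by field_simp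
  have habs : |(-x / u ^ 2)| = x / u ^ 2 := by
    rw [neg_div, abs_neg, abs_of_pos hq2]
  rw [habs, hr1]
  have e1 : ((x * (1 - u) / u : ℝ):ℂ) ^ (a - 1) =
      Complex.exp ((Real.log x + Real.log (1 - u) - Real.log u) * (a - 1)) := by
    rw [cpow_posreal _ (by positivity), Real.log_div (by positivity) hu0.ne',
      Real.log_mul hx.ne' h1u.ne']
    push_cast; ring_nf
  have e2 : ((x / u : ℝ):ℂ) ^ (-a - b) =
      Complex.exp ((Real.log x - Real.log u) * (-a - b)) := by
    rw [cpow_posreal _ hq, Real.log_div hx.ne' hu0.ne']; push_cast; ring_nf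
  have e3 : ((x / u ^ 2 : ℝ):ℂ) = Complex.exp ((Real.log x - 2 * Real.log u : ℝ)) := by
    rw [← Complex.ofReal_exp]
    congr 1
    rw [Real.exp_sub, Real.exp_log hx]
    rw [show (2:ℝ) * Real.log u = Real.log (u^2) by rw [Real.log_pow]; push_cast; ring]
    rw [Real.exp_log (by positivity)]
  have e4 : (x:ℂ) ^ (-b) = Complex.exp (Real.log x * (-b)) := cpow_posreal x hx (-b)
  have e5 : ((u:ℝ):ℂ) ^ (b - 1) = Complex.exp (Real.log u * (b - 1)) := cpow_posreal u hu0 _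
  have e6 : ((1 - u : ℝ):ℂ) ^ (a - 1) = Complex.exp (Real.log (1 - u) * (a - 1)) :=
    cpow_posreal _ h1u _
  rw [Complex.real_smul, e1, e2, e3, e4, e5, e6, ← Complex.exp_add, ← Complex.exp_add,
    ← Complex.exp_add, ← Complex.exp_add]
  congr 1
  push_cast
  ring

lemma betaIoi (ha : 0 < a.re) (hb : 0 < b.re) (hx : 0 < x) :
    (∫ t in Set.Ioi x, ((t - x : ℝ):ℂ) ^ (a - 1) * ((t:ℝ):ℂ) ^ (-a - b)) =
      (x:ℂ) ^ (-b) * (Complex.Gamma a * Complex.Gamma b / Complex.Gamma (a + b)) := by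
  rw [← image_div_Ioo x hx,
    integral_image_eq_integral_abs_deriv_smul measurableSet_Ioo (beta_deriv hx) (beta_inj hx)]
  rw [setIntegral_congr_fun measurableSet_Ioo (beta_key ha hb hx)]
  rw [integral_const_mul]
  have hbeta : ∫ u in Set.Ioo (0:ℝ) 1, ((u:ℝ):ℂ) ^ (b - 1) * ((1 - u : ℝ):ℂ) ^ (a - 1)
      = Complex.betaIntegral b a := by
    rw [Complex.betaIntegral, intervalIntegral.integral_of_le zero_le_one,
      ← integral_Ioc_eq_integral_Ioo]
    refine setIntegral_congr_fun measurableSet_Ioc fun u hu => ?_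
    push_cast
    ring
  rw [hbeta]
  congr 1
  have hab : Complex.Gamma (a + b) ≠ 0 :=
    Complex.Gamma_ne_zero_of_re_pos (by simp [Complex.add_re]; linarith)
  rw [eq_div_iff hab]
  rw [show a + b = b + a by ring]
  linear_combination -Complex.Gamma_mul_Gamma_eq_betaIntegral hb ha

lemma betaIoi_integrable (ha : 0 < a.re) (hb : 0 < b.re) (hx : 0 < x) :
    IntegrableOn (fun t : ℝ => ((t - x : ℝ):ℂ) ^ (a - 1) * ((t:ℝ):ℂ) ^ (-a - b))
      (Set.Ioi x) := by
  rw [← image_div_Ioo x hx,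
    integrableOn_image_iff_integrableOn_abs_deriv_smul measurableSet_Ioo
      (beta_deriv hx) (beta_inj hx)]
  have base : IntegrableOn
      (fun u : ℝ => (x:ℂ) ^ (-b) * (((u:ℝ):ℂ) ^ (b - 1) * ((1 - u : ℝ):ℂ) ^ (a - 1)))
      (Set.Ioo (0:ℝ) 1) := by
    have h0 : IntegrableOn (fun u : ℝ => ((u:ℝ):ℂ) ^ (b - 1) * (1 - ((u:ℝ):ℂ)) ^ (a - 1))
        (Set.Ioc (0:ℝ) 1) := by
      have := (Complex.betaIntegral_convergent hb ha).1
      simpa using this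
    have h1 : IntegrableOn (fun u : ℝ => ((u:ℝ):ℂ) ^ (b - 1) * (1 - ((u:ℝ):ℂ)) ^ (a - 1))
        (Set.Ioo (0:ℝ) 1) := h0.mono_set Set.Ioo_subset_Ioc_self
    have h2 : IntegrableOn
        (fun u : ℝ => (x:ℂ) ^ (-b) * (((u:ℝ):ℂ) ^ (b - 1) * (1 - ((u:ℝ):ℂ)) ^ (a - 1)))
        (Set.Ioo (0:ℝ) 1) := h1.const_mul ((x:ℂ) ^ (-b))
    refine IntegrableOn.congr_fun h2 (fun u hu => ?_) measurableSet_Ioo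
    push_cast
    ring
  exact base.congr_fun (fun u hu => (beta_key ha hb hx u hu).symm) measurableSet_Ioo

end beta

lemma poch_ne_zero {z : ℂ} (hz : 0 < z.re) (k : ℕ) : poch z k ≠ 0 := by
  refine Finset.prod_ne_zero_iff.2 fun i _ h => ?_
  have h2 : (z + i).re = 0 := by rw [h]; simp
  simp only [Complex.add_re, Complex.natCast_re] at h2
  have : (0:ℝ) ≤ i := Nat.cast_nonneg i
  linarith

lemma Gamma_poch {z : ℂ} (hz : 0 < z.re) (k : ℕ) :
    Complex.Gamma (z + k) = poch z k * Complex.Gamma z := by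
  induction k with
  | zero => simp [poch]
  | succ m ih =>
    have hne : z + m ≠ 0 := by
      intro h
      have h2 := congrArg Complex.re h
      simp only [Complex.add_re, Complex.natCast_re, Complex.zero_re] at h2
      have : (0:ℝ) ≤ m := Nat.cast_nonneg m
      linarith
    have h3 : z + (m+1 : ℕ) = (z + m) + 1 := by push_cast; ring
    rw [h3, Complex.Gamma_add_one _ hne, ih]
    show _ = (∏ i ∈ Finset.range (m+1), (z + i)) * Complex.Gamma z
    rw [Finset.prod_range_succ]
    show _ = (poch z m * (z + m)) * Complex.Gamma z
    ring

lemma poch_zero_of_lt (n k : ℕ) (h : n < k) : poch (-(n:ℂ)) k = 0 :=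
  Finset.prod_eq_zero (Finset.mem_range.2 h) (by simp)

lemma prod_sub_nat (n k : ℕ) (hk : k ≤ n) :
    (∏ i ∈ Finset.range k, ((n:ℂ) - i)) * (Nat.factorial (n - k)) = Nat.factorial n := by
  induction k with
  | zero => simp
  | succ m ih =>
    have hm : m ≤ n := Nat.le_of_succ_le hk
    have h1 : n - m = (n - (m+1)) + 1 := by omega
    have ihm := ih hm
    rw [Finset.prod_range_succ]
    rw [h1, Nat.factorial_succ] at ihm
    have hc : ((n:ℂ) - m) = ((n - (m+1) : ℕ) : ℂ) + 1 := by
      have : ((n - (m+1) : ℕ) : ℂ) = (n:ℂ) - (m+1) := by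
        push_cast [Nat.cast_sub hk]; ring
      rw [this]; ring
    push_cast at ihm ⊢
    rw [hc]; linear_combination ihm

lemma poch_neg_nat (n k : ℕ) (hk : k ≤ n) :
    poch (-(n:ℂ)) k * (Nat.factorial (n-k)) = (-1)^k * (Nat.factorial n) := by
  have h1 : poch (-(n:ℂ)) k = (-1)^k * ∏ i ∈ Finset.range k, ((n:ℂ) - i) := by
    rw [poch]
    rw [show ((-1:ℂ))^k = ∏ _i ∈ Finset.range k, (-1:ℂ) by simp]
    rw [← Finset.prod_mul_distrib]
    exact Finset.prod_congr rfl fun i _ => by ring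
  rw [h1, mul_assoc, prod_sub_nat n k hk]

lemma poch_add (z : ℂ) (k m : ℕ) : poch z (k + m) = poch z k * poch (z + k) m := by
  rw [poch, poch, poch, Finset.prod_range_add]
  congr 1
  exact Finset.prod_congr rfl fun i _ => by push_cast; ring

lemma gbinom_neg (a : ℂ) (k : ℕ) :
    gbinom a k = (-1)^k * poch (-a) k / (Nat.factorial k) := by
  rw [gbinom, poch]
  congr 1
  rw [show ((-1:ℂ))^k = ∏ _i ∈ Finset.range k, (-1:ℂ) by simp, ← Finset.prod_mul_distrib]
  exact Finset.prod_congr rfl fun i _ => by ring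

lemma poch_reflect (c : ℂ) (n k : ℕ) (hk : k ≤ n) :
    poch (c + 1 + k) (n - k) = ∏ i ∈ Finset.range (n - k), (c + n - i) := by
  rw [poch, ← Finset.prod_range_reflect]
  refine Finset.prod_congr rfl fun j hj => ?_
  have hj' : j < n - k := Finset.mem_range.mp hj
  have hcast : ((n - k - 1 - j : ℕ) : ℂ) = (n:ℂ) - k - 1 - j := by
    push_cast [Nat.cast_sub (by omega : j ≤ n - k - 1), Nat.cast_sub (by omega : 1 ≤ n - k),
      Nat.cast_sub hk]
    ring
  rw [hcast]; ring

set_option maxHeartbeats 2000000 in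
/-- Corollary 6: Erdélyi–Kober right-sided fractional integral of the Jacobi type
polynomial. -/
theorem ekRight_jacobiM (n : ℕ) (p q : ℝ) (hq : -1 < q) (δ ε τ : ℂ)
    (hδ : 0 < δ.re) (hτ : τ.re < 1 + min 0 ε.re) (x : ℝ) (hx : 0 < x) :
    ekRight ε δ (fun t => (t : ℂ) ^ (τ - 1) * jacobiM n p q (1 / t)) x =
      (-1) ^ n * Complex.Gamma (1 + (q : ℂ) + n) * Complex.Gamma (ε - τ + 1) /
        (Complex.Gamma (1 + (q : ℂ)) * Complex.Gamma (δ + ε - τ + 1)) *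
        (x : ℂ) ^ (τ - 1) *
        genHyp [1 + (n : ℂ) - p, -(n : ℂ), ε - τ + 1]
          [1 + (q : ℂ), δ + ε - τ + 1] (-(1 / (x : ℂ))) := by
  have hAre : 0 < (ε - τ + 1).re := by
    have h1 : min 0 ε.re ≤ ε.re := min_le_right _ _
    simp only [Complex.add_re, Complex.sub_re, Complex.one_re]
    linarith
  have hBre : 0 < (δ + ε - τ + 1).re := by
    have h1 : min 0 ε.re ≤ ε.re := min_le_right _ _
    simp only [Complex.add_re, Complex.sub_re, Complex.one_re]
    linarith
  have hQre : 0 < (1 + (q:ℂ)).re := by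
    simp only [Complex.add_re, Complex.one_re, Complex.ofReal_re]
    linarith
  have hxC : ((x:ℝ):ℂ) ≠ 0 := by exact_mod_cast hx.ne'
  have hkre : ∀ k : ℕ, 0 < (ε - τ + 1 + (k:ℂ)).re := by
    intro k
    have h2 : (0:ℝ) ≤ (k:ℝ) := Nat.cast_nonneg k
    have h3 := hAre
    simp only [Complex.add_re, Complex.sub_re, Complex.one_re, Complex.natCast_re] at h3 ⊢
    linarith
  have hint : Set.EqOn
      (fun t : ℝ => ((t - x : ℝ):ℂ) ^ (δ - 1) * ((t:ℝ):ℂ) ^ (-δ - ε) *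
        (((t:ℝ):ℂ) ^ (τ - 1) * jacobiM n (p:ℂ) (q:ℂ) (1 / (t:ℂ))))
      (fun t : ℝ => ∑ k ∈ Finset.range (n+1),
        ((-1:ℂ)^n * (Nat.factorial n : ℂ) * (gbinom ((p:ℂ) - n - 1) k
          * gbinom ((q:ℂ) + n) (n - k)) * (-1:ℂ)^k) *
        (((t - x : ℝ):ℂ) ^ (δ - 1) * ((t:ℝ):ℂ) ^ (-δ - (ε - τ + 1 + (k:ℂ)))))
      (Set.Ioi x) := by
    intro t ht
    have ht0 : (0:ℝ) < t := hx.trans ht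
    have htC : ((t:ℝ):ℂ) ≠ 0 := by exact_mod_cast ht0.ne'
    simp only [jacobiM, Finset.mul_sum]
    refine Finset.sum_congr rfl fun k hk => ?_
    have h1 : (-(1/((t:ℝ):ℂ)))^k = (-1:ℂ)^k * ((t:ℝ):ℂ)^(-(k:ℂ)) := by
      rw [neg_pow, one_div, inv_pow, ← Complex.cpow_natCast ((t:ℝ):ℂ) k, ← Complex.cpow_neg]
    have h2 : ((t:ℝ):ℂ)^(-δ - (ε - τ + 1 + (k:ℂ))) =
        ((t:ℝ):ℂ)^(-δ - ε) * ((t:ℝ):ℂ)^(τ - 1) * ((t:ℝ):ℂ)^(-(k:ℂ)) := by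
      rw [← Complex.cpow_add _ _ htC, ← Complex.cpow_add _ _ htC]
      congr 1
      ring
    rw [h2, h1]
    ring
  rw [ekRight, setIntegral_congr_fun measurableSet_Ioi hint,
    integral_finset_sum _ (fun k _ => ((betaIoi_integrable hδ (hkre k) hx).const_mul _))]
  have hval : ∀ k ∈ Finset.range (n+1),
      (∫ t in Set.Ioi x,
        ((-1:ℂ)^n * (Nat.factorial n : ℂ) * (gbinom ((p:ℂ) - n - 1) k
          * gbinom ((q:ℂ) + n) (n - k)) * (-1:ℂ)^k) *
        (((t - x : ℝ):ℂ) ^ (δ - 1) * ((t:ℝ):ℂ) ^ (-δ - (ε - τ + 1 + (k:ℂ)))))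
      = ((-1:ℂ)^n * (Nat.factorial n : ℂ) * (gbinom ((p:ℂ) - n - 1) k
          * gbinom ((q:ℂ) + n) (n - k)) * (-1:ℂ)^k) *
        ((x:ℂ) ^ (-(ε - τ + 1 + (k:ℂ))) *
          (Complex.Gamma δ * Complex.Gamma (ε - τ + 1 + (k:ℂ)) /
            Complex.Gamma (δ + (ε - τ + 1 + (k:ℂ))))) := by
    intro k _
    rw [integral_const_mul, betaIoi hδ (hkre k) hx]
  rw [Finset.sum_congr rfl hval, genHyp,
    tsum_eq_sum (s := Finset.range (n+1)) (fun k hk => by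
      have hnk : n < k := by simpa using hk
      simp [poch_zero_of_lt n k hnk])]
  rw [Finset.mul_sum, Finset.mul_sum]
  refine Finset.sum_congr rfl fun k hk => ?_
  have hk' : k ≤ n := by
    have := Finset.mem_range.mp hk
    omega
  have hGB : Complex.Gamma (δ + (ε - τ + 1 + (k:ℂ))) =
      poch (δ + ε - τ + 1) k * Complex.Gamma (δ + ε - τ + 1) := by
    rw [show δ + (ε - τ + 1 + (k:ℂ)) = δ + ε - τ + 1 + (k:ℂ) by ring]
    exact Gamma_poch hBre k
  have hgb1 : gbinom ((p:ℂ) - n - 1) k =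
      (-1:ℂ)^k * poch (1 + (n:ℂ) - p) k / (Nat.factorial k) := by
    rw [gbinom_neg, show -((p:ℂ) - n - 1) = 1 + (n:ℂ) - p by ring]
  have hgb2 : gbinom ((q:ℂ) + n) (n - k) =
      poch (1 + (q:ℂ) + k) (n - k) / (Nat.factorial (n - k)) := by
    have h := poch_reflect (q:ℂ) n k hk'
    rw [show (q:ℂ) + 1 + (k:ℕ) = 1 + (q:ℂ) + (k:ℕ) by push_cast; ring] at h
    rw [gbinom, ← h]
  have hsplit : poch (1 + (q:ℂ)) n = poch (1 + (q:ℂ)) k * poch (1 + (q:ℂ) + k) (n - k) := by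
    have h := poch_add (1 + (q:ℂ)) k (n - k)
    rw [show k + (n - k) = n by omega] at h
    exact h
  have hf2 : ((Nat.factorial (n - k) : ℕ) : ℂ) ≠ 0 := by
    exact_mod_cast (Nat.factorial_ne_zero (n - k))
  have hpn : poch (-(n:ℂ)) k =
      (-1:ℂ)^k * (Nat.factorial n : ℂ) / (Nat.factorial (n - k) : ℂ) := by
    rw [eq_div_iff hf2]
    exact poch_neg_nat n k hk'
  have hxk : (-(1/((x:ℝ):ℂ)))^k = (-1:ℂ)^k * ((x:ℝ):ℂ)^(-(k:ℂ)) := by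
    rw [neg_pow, one_div, inv_pow, ← Complex.cpow_natCast ((x:ℝ):ℂ) k, ← Complex.cpow_neg]
  have hxcomb : ((x:ℝ):ℂ)^ε * ((x:ℝ):ℂ)^(-(ε - τ + 1 + (k:ℂ))) =
      ((x:ℝ):ℂ)^(τ - 1) * ((x:ℝ):ℂ)^(-(k:ℂ)) := by
    rw [← Complex.cpow_add _ _ hxC, ← Complex.cpow_add _ _ hxC]
    congr 1
    ring
  have hΓδ : Complex.Gamma δ ≠ 0 := Complex.Gamma_ne_zero_of_re_pos hδ
  have hΓB : Complex.Gamma (δ + ε - τ + 1) ≠ 0 := Complex.Gamma_ne_zero_of_re_pos hBre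
  have hΓQ : Complex.Gamma (1 + (q:ℂ)) ≠ 0 := Complex.Gamma_ne_zero_of_re_pos hQre
  have hpQk : poch (1 + (q:ℂ)) k ≠ 0 := poch_ne_zero hQre k
  have hpBk : poch (δ + ε - τ + 1) k ≠ 0 := poch_ne_zero hBre k
  have hf1 : ((Nat.factorial k : ℕ) : ℂ) ≠ 0 := by
    exact_mod_cast (Nat.factorial_ne_zero k)
  have e1 : Complex.Gamma δ * (Complex.Gamma δ)⁻¹ = 1 := mul_inv_cancel₀ hΓδ
  have e2 : Complex.Gamma (1 + (q:ℂ)) * (Complex.Gamma (1 + (q:ℂ)))⁻¹ = 1 := mul_inv_cancel₀ hΓQ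
  have e3 : poch (1 + (q:ℂ)) k * (poch (1 + (q:ℂ)) k)⁻¹ = 1 := mul_inv_cancel₀ hpQk
  simp only [List.map_cons, List.map_nil, List.prod_cons, List.prod_nil, mul_one]
  rw [hGB, Gamma_poch hAre k, Gamma_poch hQre n, hgb1, hgb2, hpn, hxk, hsplit]
  set T : ℂ := (-1:ℂ)^n * ((Nat.factorial n : ℕ):ℂ) * ((-1:ℂ)^k)^2 *
      poch (1 + (n:ℂ) - p) k * poch (1 + (q:ℂ) + (k:ℂ)) (n - k) * poch (ε - τ + 1) k *
      Complex.Gamma (ε - τ + 1) * (((Nat.factorial k : ℕ):ℂ))⁻¹ *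
      (((Nat.factorial (n - k) : ℕ):ℂ))⁻¹ * (poch (δ + ε - τ + 1) k)⁻¹ *
      (Complex.Gamma (δ + ε - τ + 1))⁻¹ with hT
  linear_combination (T * Complex.Gamma δ * (Complex.Gamma δ)⁻¹) * hxcomb
    + (T * ((x:ℝ):ℂ)^(τ - 1) * ((x:ℝ):ℂ)^(-(k:ℂ))) * e1
    - (T * ((x:ℝ):ℂ)^(τ - 1) * ((x:ℝ):ℂ)^(-(k:ℂ)) * Complex.Gamma (1 + (q:ℂ)) *
        (Complex.Gamma (1 + (q:ℂ)))⁻¹) * e3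
    - (T * ((x:ℝ):ℂ)^(τ - 1) * ((x:ℝ):ℂ)^(-(k:ℂ))) * e2
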